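/- For the Cayley 4-form Φ on ℝ^8, any 1-form η, and the 3-form γ = ⋆(Φ ∧ η), the pointwise norm satisfies |γ|² = 7|η|²; equivalently, (Φ ∧ η) ∧ ⋆(Φ ∧ η) = 7 η ∧ ⋆η. -/

import Mathlib

open Finset

noncomputable section

/-- The exterior algebra of (ℝ^8)*, modeled as coefficient functions on basis index sets. -/
abbrev Form := Finset (Fin 8) → ℝ

/-- Sign `(-1)^{#{(i,j) ∈ t × u : j < i}}` arising when merging two wedge monomials. -/
def esign (t u : Finset (Fin 8)) : ℝ :=
  (-1 : ℝ) ^ ((t ×ˢ u).filter (fun p => p.2 < p.1)).card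

/-- Wedge product of forms. -/
def wedge (α β : Form) : Form := fun s =>
  ∑ t ∈ s.powerset, esign t (s \ t) * α t * β (s \ t)

/-- Hodge star for the standard Euclidean metric and orientation `e^{01234567}`,
characterized by `α ∧ ⋆β = ⟨α,β⟩ vol`. -/
def hodge (α : Form) : Form := fun u => esign uᶜ u * α uᶜ

/-- Inner product on forms, making the basis monomials orthonormal. -/
def formInner (α β : Form) : ℝ := ∑ s : Finset (Fin 8), α s * β s

/-- Basis monomial `e^{i₁} ∧ ⋯ ∧ e^{i_k}` for `s = {i₁ < ⋯ < i_k}`. -/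
def eS (s : Finset (Fin 8)) : Form := fun t => if t = s then 1 else 0

/-- `α` is a `k`-form. -/
def IsForm (k : ℕ) (α : Form) : Prop := ∀ s, s.card ≠ k → α s = 0

/-- The standard Cayley (Spin(7)) 4-form on ℝ^8. -/
def Phi : Form :=
  eS {0,1,2,3} - eS {0,1,4,5} - eS {0,1,6,7} - eS {0,2,4,6} + eS {0,2,5,7}
  - eS {0,3,4,7} - eS {0,3,5,6} + eS {4,5,6,7} - eS {2,3,6,7} - eS {2,3,4,5}
  - eS {1,3,5,7} + eS {1,3,4,6} - eS {1,2,5,6} - eS {1,2,4,7}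

/-- Interior product with the basis vector `e_i`. -/
def iota (i : Fin 8) (α : Form) : Form := fun s =>
  if i ∈ s then 0 else (-1 : ℝ) ^ (s.filter (· < i)).card * α (insert i s)

/-- Interior product with the vector `v`. -/
def iotaV (v : Fin 8 → ℝ) (α : Form) : Form := fun s => ∑ i, v i * iota i α s

/-- Musical isomorphism `♭ : ℝ^8 → Λ¹(ℝ^8)*`. -/
def flat (v : Fin 8 → ℝ) : Form := fun s => ∑ i, v i * eS {i} s

/-- Projection onto `Λ²_7` (eigenvalue 3 of `ω ↦ ⋆(Φ ∧ ω)`). -/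
def proj7 (α : Form) : Form := (4 : ℝ)⁻¹ • (α + hodge (wedge Phi α))

/-- Projection onto `Λ²_21` (eigenvalue -1 of `ω ↦ ⋆(Φ ∧ ω)`). -/
def proj21 (α : Form) : Form := (4 : ℝ)⁻¹ • ((3 : ℝ) • α - hodge (wedge Phi α))

/-- Evaluation of a 4-form on four vectors. -/
def ev4 (α : Form) (x y z w : Fin 8 → ℝ) : ℝ :=
  iotaV w (iotaV z (iotaV y (iotaV x α))) ∅

/-- Standard inner product on ℝ^8. -/
def dot (u v : Fin 8 → ℝ) : ℝ := ∑ i, u i * v i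

/-- Standard basis vector. -/
def std (i : Fin 8) : Fin 8 → ℝ := fun j => if j = i then 1 else 0

end

noncomputable section
namespace Spin7Aux

open Finset

def S : Fin 14 → Finset (Fin 8) :=
  ![{0,1,2,3}, {0,1,4,5}, {0,1,6,7}, {0,2,4,6}, {0,2,5,7}, {0,3,4,7}, {0,3,5,6},
    {4,5,6,7}, {2,3,6,7}, {2,3,4,5}, {1,3,5,7}, {1,3,4,6}, {1,2,5,6}, {1,2,4,7}]

def c : Fin 14 → ℝ := ![1,-1,-1,-1,1,-1,-1,1,-1,-1,-1,1,-1,-1]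

lemma hS4 : ∀ k : Fin 14, (S k).card = 4 := by decide

lemma hS6 : ∀ k l : Fin 14, k ≠ l → 6 ≤ (S k ∪ S l).card := by decide

lemma hcount : ∀ i : Fin 8, (univ.filter fun k => i ∉ S k).card = 7 := by decide

lemma c_mul_self (k : Fin 14) : c k * c k = 1 := by fin_cases k <;> norm_num [c]

lemma esign_mul_self (t u : Finset (Fin 8)) : esign t u * esign t u = 1 := by
  rw [esign, ← pow_add]
  exact Even.neg_one_pow ⟨_, rfl⟩

lemma hPhi : Phi = ∑ k, c k • eS (S k) := by
  funext s
  have hneg : ∀ (p : Prop) [Decidable p], (if p then (-1 : ℝ) else 0) = -(if p then 1 else 0) := by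
    intro p _; split <;> ring
  simp only [Phi, c, S, Fin.sum_univ_succ, eS, Finset.sum_apply, Pi.smul_apply, Pi.add_apply,
    Pi.sub_apply, smul_eq_mul, Matrix.cons_val_zero, Matrix.cons_val_succ, Fin.sum_univ_zero,
    one_mul, neg_one_mul, hneg, add_zero]
  simp only [sub_eq_add_neg, add_assoc]
  congr

lemma formInner_hodge (α β : Form) : formInner (hodge α) (hodge β) = formInner α β := by
  unfold formInner hodge
  rw [← Equiv.sum_comp (Function.Involutive.toPerm _ (compl_compl (α := Finset (Fin 8))))
    (fun s => α s * β s)]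
  apply Finset.sum_congr rfl
  intro u _
  calc esign uᶜ u * α uᶜ * (esign uᶜ u * β uᶜ)
      = (esign uᶜ u * esign uᶜ u) * (α uᶜ * β uᶜ) := by ring
    _ = α uᶜ * β uᶜ := by rw [esign_mul_self, one_mul]

lemma wedge_sum_left {ι : Type*} (K : Finset ι) (f : ι → Form) (β : Form) :
    wedge (∑ k ∈ K, f k) β = ∑ k ∈ K, wedge (f k) β := by
  funext s
  simp only [wedge, Finset.sum_apply, Finset.mul_sum, Finset.sum_mul]
  exact Finset.sum_comm

lemma wedge_smul_left (a : ℝ) (α β : Form) : wedge (a • α) β = a • wedge α β := by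
  funext s
  simp only [wedge, Pi.smul_apply, smul_eq_mul, Finset.mul_sum]
  apply Finset.sum_congr rfl
  intros; ring

lemma formInner_sum_sum (f g : Fin 14 → Form) :
    formInner (∑ k, f k) (∑ l, g l) = ∑ k, ∑ l, formInner (f k) (g l) := by
  unfold formInner
  have hstep : ∀ s, (∑ k, f k) s * (∑ l, g l) s = ∑ k, ∑ l, f k s * g l s := by
    intro s
    simp only [Finset.sum_apply]
    rw [Finset.sum_mul]
    exact Finset.sum_congr rfl fun k _ => Finset.mul_sum _ _ _
  simp only [hstep]
  rw [Finset.sum_comm]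
  exact Finset.sum_congr rfl fun k _ => Finset.sum_comm

lemma formInner_smul_smul (a b : ℝ) (α β : Form) :
    formInner (a • α) (b • β) = a * b * formInner α β := by
  unfold formInner
  rw [Finset.mul_sum]
  apply Finset.sum_congr rfl
  intros; simp only [Pi.smul_apply, smul_eq_mul]; ring

lemma wedge_eS_left (T : Finset (Fin 8)) (β : Form) (s : Finset (Fin 8)) :
    wedge (eS T) β s = if T ⊆ s then esign T (s \ T) * β (s \ T) else 0 := by
  simp only [wedge, eS, mul_ite, mul_one, mul_zero, ite_mul, zero_mul]
  rw [Finset.sum_ite_eq' s.powerset T (fun t => esign t (s \ t) * β (s \ t))]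
  simp [Finset.mem_powerset]

lemma offdiag (η : Form) (hη : IsForm 1 η) (T T' : Finset (Fin 8))
    (hT : T.card = 4) (h6 : 6 ≤ (T ∪ T').card) :
    formInner (wedge (eS T) η) (wedge (eS T') η) = 0 := by
  apply Finset.sum_eq_zero
  intro s _
  rw [wedge_eS_left, wedge_eS_left]
  by_cases h1 : T ⊆ s
  · by_cases h2 : T' ⊆ s
    · simp only [if_pos h1, if_pos h2]
      by_cases h3 : η (s \ T) = 0
      · rw [h3]; ring
      · exfalso
        have hc : (s \ T).card = 1 := by by_contra hc; exact h3 (hη _ hc)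
        have h5 := Finset.card_sdiff_add_card_eq_card h1
        have h6' : 6 ≤ s.card :=
          le_trans h6 (Finset.card_le_card (Finset.union_subset h1 h2))
        omega
    · simp [h2]
  · simp [h1]

lemma diag (η : Form) (T : Finset (Fin 8)) :
    formInner (wedge (eS T) η) (wedge (eS T) η) = ∑ u ∈ Tᶜ.powerset, η u * η u := by
  have key : ∀ s, wedge (eS T) η s * wedge (eS T) η s
      = if T ⊆ s then η (s \ T) * η (s \ T) else 0 := by
    intro s
    rw [wedge_eS_left]
    by_cases h : T ⊆ s
    · simp only [if_pos h]
      calc esign T (s \ T) * η (s \ T) * (esign T (s \ T) * η (s \ T))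
          = (esign T (s \ T) * esign T (s \ T)) * (η (s \ T) * η (s \ T)) := by ring
        _ = η (s \ T) * η (s \ T) := by rw [esign_mul_self, one_mul]
    · simp [h]
  unfold formInner
  simp only [key]
  rw [← Finset.sum_filter]
  apply Finset.sum_nbij' (fun s => s \ T) (fun u => u ∪ T)
  · intro s hs
    simp only [Finset.mem_powerset]
    intro a ha
    simp only [Finset.mem_sdiff] at ha
    exact Finset.mem_compl.mpr ha.2
  · intro u hu
    simp only [Finset.mem_filter, Finset.mem_univ, true_and]
    exact Finset.subset_union_right
  · intro s hs
    simp only [Finset.mem_filter] at hs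
    exact Finset.sdiff_union_of_subset hs.2
  · intro u hu
    simp only [Finset.mem_powerset] at hu
    ext a
    simp only [Finset.mem_sdiff, Finset.mem_union]
    constructor
    · rintro ⟨h1 | h1, h2⟩
      · exact h1
      · exact absurd h1 h2
    · intro ha
      exact ⟨Or.inl ha, fun hT => (Finset.mem_compl.mp (hu ha)) hT⟩
  · intro s hs
    rfl

lemma core (η : Form) (hη : IsForm 1 η) :
    formInner (wedge Phi η) (wedge Phi η) = 7 * formInner η η := by
  rw [hPhi, wedge_sum_left]
  simp only [wedge_smul_left]
  rw [formInner_sum_sum]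
  have step1 : ∀ k : Fin 14,
      (∑ l, formInner (c k • wedge (eS (S k)) η) (c l • wedge (eS (S l)) η))
      = ∑ u ∈ (S k)ᶜ.powerset, η u * η u := by
    intro k
    rw [Finset.sum_eq_single k]
    · rw [formInner_smul_smul, diag, c_mul_self, one_mul]
    · intro l _ hlk
      rw [formInner_smul_smul, offdiag η hη _ _ (hS4 k) (hS6 k l (Ne.symm hlk)), mul_zero]
    · intro h; exact absurd (Finset.mem_univ k) h
  simp only [step1]
  have h1 : ∀ k : Fin 14, (∑ u ∈ (S k)ᶜ.powerset, η u * η u)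
      = ∑ u : Finset (Fin 8), if u ∈ (S k)ᶜ.powerset then η u * η u else 0 := by
    intro k
    rw [Finset.sum_ite_mem, Finset.univ_inter]
  simp only [h1]
  rw [Finset.sum_comm]
  unfold formInner
  rw [Finset.mul_sum]
  apply Finset.sum_congr rfl
  intro u _
  by_cases h0 : η u = 0
  · simp [h0]
  · have hu1 : u.card = 1 := by by_contra hc; exact h0 (hη u hc)
    obtain ⟨i, rfl⟩ := Finset.card_eq_one.mp hu1
    simp only [Finset.mem_powerset, Finset.singleton_subset_iff, Finset.mem_compl]
    rw [Finset.sum_ite, Finset.sum_const_zero, add_zero, Finset.sum_const, hcount i]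
    simp only [nsmul_eq_mul, Nat.cast_ofNat]

lemma isForm_Phi : IsForm 4 Phi := by
  intro s hs
  rw [hPhi]
  simp only [Finset.sum_apply, Pi.smul_apply, smul_eq_mul]
  apply Finset.sum_eq_zero
  intro k _
  have hne : s ≠ S k := fun h => hs (by rw [h]; exact hS4 k)
  simp [eS, hne]

lemma isForm_wedge {k l : ℕ} {α β : Form} (hα : IsForm k α) (hβ : IsForm l β) :
    IsForm (k + l) (wedge α β) := by
  intro s hs
  apply Finset.sum_eq_zero
  intro t ht
  rw [Finset.mem_powerset] at ht
  by_cases h1 : t.card = k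
  · have h2 : (s \ t).card ≠ l := by
      have := Finset.card_sdiff_add_card_eq_card ht
      omega
    rw [hβ _ h2, mul_zero]
  · rw [hα _ h1]; ring

lemma wedge_hodge {k : ℕ} {α β : Form} (hα : IsForm k α) (hβ : IsForm k β) :
    wedge α (hodge β) = formInner α β • eS Finset.univ := by
  funext s
  by_cases hs : s = Finset.univ
  · subst hs
    show (∑ t ∈ Finset.univ.powerset, _) = _
    rw [Finset.powerset_univ]
    have hRHS : (formInner α β • eS Finset.univ) Finset.univ = formInner α β := by
      simp [eS]
    rw [hRHS]
    unfold formInner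
    apply Finset.sum_congr rfl
    intro t _
    show esign t (univ \ t) * α t * hodge β (univ \ t) = α t * β t
    have h1 : Finset.univ \ t = tᶜ := (Finset.compl_eq_univ_sdiff t).symm
    rw [h1]
    show esign t tᶜ * α t * (esign tᶜᶜ tᶜ * β tᶜᶜ) = α t * β t
    rw [compl_compl]
    calc esign t tᶜ * α t * (esign t tᶜ * β t)
        = (esign t tᶜ * esign t tᶜ) * (α t * β t) := by ring
      _ = α t * β t := by rw [esign_mul_self, one_mul]
  · have hRHS : (formInner α β • eS Finset.univ) s = 0 := by simp [eS, hs]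
    rw [hRHS]
    apply Finset.sum_eq_zero
    intro t ht
    rw [Finset.mem_powerset] at ht
    by_cases h1 : α t = 0
    · rw [h1]; ring
    · have htk : t.card = k := by by_contra hc; exact h1 (hα _ hc)
      show esign t (s \ t) * α t * (esign (s \ t)ᶜ (s \ t) * β (s \ t)ᶜ) = 0
      by_cases h2 : β (s \ t)ᶜ = 0
      · rw [h2]; ring
      · exfalso
        have hck : (s \ t)ᶜ.card = k := by by_contra hc; exact h2 (hβ _ hc)
        have hc8 : (s \ t)ᶜ.card = 8 - (s \ t).card := by
          rw [Finset.card_compl, Fintype.card_fin]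
        have hle : (s \ t).card ≤ 8 :=
          le_trans (Finset.card_le_univ _) (by rw [Fintype.card_fin])
        have hkle : k ≤ 8 := by
          rw [← htk]
          exact le_trans (Finset.card_le_univ _) (by rw [Fintype.card_fin])
        have hsum := Finset.card_sdiff_add_card_eq_card ht
        exact hs (Finset.eq_univ_of_card _ (by rw [Fintype.card_fin]; omega))

end Spin7Aux
end

noncomputable section

open Spin7Aux in
/-- For any 1-form η and γ = ⋆(Φ ∧ η), one has |γ|² = 7|η|²;
equivalently (Φ ∧ η) ∧ ⋆(Φ ∧ η) = 7 η ∧ ⋆η. -/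
theorem norm_star_phi_wedge_one_form (η : Form) (hη : IsForm 1 η) :
    formInner (hodge (wedge Phi η)) (hodge (wedge Phi η)) = 7 * formInner η η ∧
    wedge (wedge Phi η) (hodge (wedge Phi η)) = (7 : ℝ) • wedge η (hodge η) := by
  have hA : IsForm 5 (wedge Phi η) := isForm_wedge isForm_Phi hη
  have hcore := core η hη
  constructor
  · rw [formInner_hodge]; exact hcore
  · rw [wedge_hodge hA hA, wedge_hodge hη hη, hcore, smul_smul]

end
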